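/- In the automaton group of automaton 887, for all n ≥ 2: (ca)^{2^n}|_{111} = (ca)^{2^{n-1}} and (ca)^{2^n}(1^∞) = (111)^{n-1}(1010)1^∞. In particular (ca)^n(1^∞) ≠ 1^∞ for all n ≥ 1, so ca has infinite order. -/

import Mathlib

namespace Stmt12


/-- A Mealy automaton over the binary alphabet with state set `S`. -/
structure Mealy (S : Type) where
  /-- transition function -/
  δ : S → Bool → S
  /-- output function -/
  τ : S → Bool → Bool

namespace Mealy

variable {S : Type} (M : Mealy S)

/-- The state reached from `q` after reading the first `n` letters of `w`. -/
def stateAt (q : S) (w : ℕ → Bool) : ℕ → S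
  | 0 => q
  | n + 1 => M.δ (stateAt q w n) (w n)

/-- The action of state `q` on infinite words. -/
def act (q : S) (w : ℕ → Bool) : ℕ → Bool :=
  fun n => M.τ (M.stateAt q w n) (w n)

/-- The inverse automaton (for automata whose output functions are involutions). -/
def inv : Mealy S := ⟨fun q b => M.δ q (M.τ q b), M.τ⟩

theorem stateAt_inv_act (h : ∀ q b, M.τ q (M.τ q b) = b) (q : S) (w : ℕ → Bool) :
    ∀ n, M.inv.stateAt q (M.act q w) n = M.stateAt q w n := by
  intro n
  induction n with
  | zero => rfl
  | succ n ih =>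
    show M.inv.δ (M.inv.stateAt q (M.act q w) n) (M.act q w n) = M.δ (M.stateAt q w n) (w n)
    rw [ih]
    show M.δ (M.stateAt q w n) (M.τ (M.stateAt q w n) (M.τ (M.stateAt q w n) (w n))) = _
    rw [h]

theorem inv_act (h : ∀ q b, M.τ q (M.τ q b) = b) (q : S) (w : ℕ → Bool) :
    M.inv.act q (M.act q w) = w := by
  funext n
  show M.inv.τ (M.inv.stateAt q (M.act q w) n) (M.act q w n) = w n
  rw [stateAt_inv_act M h]
  show M.τ (M.stateAt q w n) (M.τ (M.stateAt q w n) (w n)) = w n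
  rw [h]

theorem inv_inv (h : ∀ q b, M.τ q (M.τ q b) = b) : M.inv.inv = M := by
  obtain ⟨d, t⟩ := M
  simp only [inv]
  congr 1
  funext q b
  exact congrArg (d q) (h q b)

/-- The permutation of the set of infinite binary words defined by state `q`. -/
def perm (h : ∀ q b, M.τ q (M.τ q b) = b) (q : S) : Equiv.Perm (ℕ → Bool) where
  toFun := M.act q
  invFun := M.inv.act q
  left_inv := fun w => M.inv_act h q w
  right_inv := fun w => by
    have h2 : ∀ q b, M.inv.τ q (M.inv.τ q b) = b := h
    have := M.inv.inv_act h2 q w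
    rwa [M.inv_inv h] at this

end Mealy

/-- Prepend a finite word to an infinite word. -/
def cat (u : List Bool) (w : ℕ → Bool) : ℕ → Bool :=
  fun n => u.getD n (w (n - u.length))

/-- The (semantic) restriction of a transformation of infinite words to the
subtree indexed by the finite word `u`. -/
def resW (f : (ℕ → Bool) → ℕ → Bool) (u : List Bool) : (ℕ → Bool) → ℕ → Bool :=
  fun w n => f (cat u w) (n + u.length)

/-- The periodic infinite word with period `u`. -/
def per (u : List Bool) : ℕ → Bool := fun n => u.getD (n % u.length) false

/-- Left-shift equivalence of infinite words: they share a common infinite tail. -/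
def seq (u v : ℕ → Bool) : Prop := ∃ k l : ℕ, ∀ n, u (n + k) = v (n + l)

inductive St : Type
  | a | b | c
deriving DecidableEq

instance instFintypeSt : Fintype St := ⟨{St.a, St.b, St.c}, fun x => by cases x <;> simp⟩

/-- Automaton 887. -/
def M : Mealy St where
  δ := fun q x => match q, x with
    | .a, false => .b | .a, true => .b
    | .b, false => .c | .b, true => .c
    | .c, false => .b | .c, true => .a
  τ := fun q x => match q with
    | .a => !x
    | .b => x
    | .c => x

theorem M_inv : ∀ q x, M.τ q (M.τ q x) = x := by decide

/-- The automorphism of the binary tree boundary defined by state `a`. -/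
def a : Equiv.Perm (ℕ → Bool) := M.perm M_inv .a

/-- The automorphism of the binary tree boundary defined by state `b`. -/
def b : Equiv.Perm (ℕ → Bool) := M.perm M_inv .b

/-- The automorphism of the binary tree boundary defined by state `c`. -/
def c : Equiv.Perm (ℕ → Bool) := M.perm M_inv .c

section Aux

lemma cat_nil (w : ℕ → Bool) : cat [] w = w := by
  funext n; simp [cat]

lemma cat_cons_zero (x : Bool) (u : List Bool) (w : ℕ → Bool) : cat (x :: u) w 0 = x := by
  simp [cat]

lemma cat_cons_succ (x : Bool) (u : List Bool) (w : ℕ → Bool) (n : ℕ) :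
    cat (x :: u) w (n + 1) = cat u w n := by
  simp [cat, Nat.succ_sub_succ]

lemma cat_cons (x : Bool) (u : List Bool) (w : ℕ → Bool) :
    cat (x :: u) w = cat [x] (cat u w) := by
  funext n
  cases n with
  | zero => rw [cat_cons_zero, cat_cons_zero]
  | succ n => rw [cat_cons_succ, cat_cons_succ, cat_nil]

lemma cat_append (u v : List Bool) (w : ℕ → Bool) :
    cat (u ++ v) w = cat u (cat v w) := by
  induction u with
  | nil => rw [List.nil_append, cat_nil]
  | cons x u ih => rw [List.cons_append, cat_cons, ih, ← cat_cons]

lemma cat_out (u : List Bool) (w : ℕ → Bool) (n : ℕ) : cat u w (n + u.length) = w n := by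
  have h : u.length ≤ n + u.length := Nat.le_add_left _ _
  simp [cat, List.getElem?_eq_none h]

lemma stateAt_cons {S : Type} (N : Mealy S) (q : S) (x : Bool) (w : ℕ → Bool) :
    ∀ n, N.stateAt q (cat [x] w) (n + 1) = N.stateAt (N.δ q x) w n := by
  intro n
  induction n with
  | zero =>
    show N.δ q (cat [x] w 0) = _
    rw [cat_cons_zero]
    rfl
  | succ n ih =>
    show N.δ (N.stateAt q (cat [x] w) (n + 1)) (cat [x] w (n + 1)) =
      N.δ (N.stateAt (N.δ q x) w n) (w n)
    rw [ih, cat_cons_succ, cat_nil]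

lemma act_cons {S : Type} (N : Mealy S) (q : S) (x : Bool) (w : ℕ → Bool) :
    N.act q (cat [x] w) = cat [N.τ q x] (N.act (N.δ q x) w) := by
  funext n
  cases n with
  | zero =>
    show N.τ (N.stateAt q (cat [x] w) 0) (cat [x] w 0) = cat [N.τ q x] _ 0
    rw [cat_cons_zero, cat_cons_zero]
    rfl
  | succ n =>
    show N.τ (N.stateAt q (cat [x] w) (n + 1)) (cat [x] w (n + 1)) = cat [N.τ q x] _ (n + 1)
    rw [stateAt_cons, cat_cons_succ, cat_cons_succ, cat_nil, cat_nil]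
    rfl

lemma M_inv_eq : M.inv = M := by
  have h : (fun q b => M.δ q (M.τ q b)) = M.δ := by
    funext q x; cases q <;> cases x <;> rfl
  rw [Mealy.inv, h]

lemma invol (q : St) (w : ℕ → Bool) : M.act q (M.act q w) = w := by
  have h := M.inv_act M_inv q w
  rwa [M_inv_eq] at h

lemma actA (x : Bool) (w : ℕ → Bool) :
    M.act .a (cat [x] w) = cat [!x] (M.act .b w) := by
  rw [act_cons]; cases x <;> rfl

lemma actB (x : Bool) (w : ℕ → Bool) :
    M.act .b (cat [x] w) = cat [x] (M.act .c w) := by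
  rw [act_cons]; cases x <;> rfl

lemma actC_t (w : ℕ → Bool) :
    M.act .c (cat [true] w) = cat [true] (M.act .a w) := by
  rw [act_cons]; rfl

lemma actC_f (w : ℕ → Bool) :
    M.act .c (cat [false] w) = cat [false] (M.act .b w) := by
  rw [act_cons]; rfl

/-- The boundary map of `c * a`. -/
def G : (ℕ → Bool) → ℕ → Bool := fun w => M.act .c (M.act .a w)

/-- The boundary map of `a * b`. -/
def H : (ℕ → Bool) → ℕ → Bool := fun w => M.act .a (M.act .b w)

/-- The boundary map of `b * c`. -/
def K : (ℕ → Bool) → ℕ → Bool := fun w => M.act .b (M.act .c w)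

lemma G_t (w : ℕ → Bool) : G (cat [true] w) = cat [false] w := by
  simp only [G, actA, Bool.not_true, actC_f, invol]

lemma G_f (w : ℕ → Bool) : G (cat [false] w) = cat [true] (H w) := by
  simp only [G, H, actA, Bool.not_false, actC_t]

lemma H_x (x : Bool) (w : ℕ → Bool) : H (cat [x] w) = cat [!x] (K w) := by
  simp only [H, K, actB, actA]

lemma K_t (w : ℕ → Bool) : K (cat [true] w) = cat [true] (G w) := by
  simp only [K, G, actC_t, actB]

lemma G_two (x : Bool) (w : ℕ → Bool) : G (G (cat [x] w)) = cat [x] (H w) := by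
  cases x
  · rw [G_f, G_t]
  · rw [G_t, G_f]

lemma H_two (x : Bool) (w : ℕ → Bool) : H (H (cat [x] w)) = cat [x] (K (K w)) := by
  rw [H_x, H_x, Bool.not_not]

lemma G_pow : ∀ (m : ℕ) (x : Bool) (w : ℕ → Bool),
    G^[2 * m] (cat [x] w) = cat [x] (H^[m] w) := by
  intro m
  induction m with
  | zero => intro x w; rfl
  | succ m ih =>
    intro x w
    rw [show 2 * (m + 1) = 2 * m + 2 from by ring, Function.iterate_add_apply,
      show G^[2] (cat [x] w) = cat [x] (H w) from G_two x w, ih,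
      ← Function.iterate_succ_apply]

lemma H_pow : ∀ (m : ℕ) (x : Bool) (w : ℕ → Bool),
    H^[2 * m] (cat [x] w) = cat [x] (K^[2 * m] w) := by
  intro m
  induction m with
  | zero => intro x w; rfl
  | succ m ih =>
    intro x w
    rw [show 2 * (m + 1) = 2 * m + 2 from by ring, Function.iterate_add_apply,
      show H^[2] (cat [x] w) = cat [x] (K (K w)) from H_two x w, ih,
      Function.iterate_add_apply]
    rfl

lemma K_pow : ∀ (m : ℕ) (w : ℕ → Bool),
    K^[m] (cat [true] w) = cat [true] (G^[m] w) := by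
  intro m
  induction m with
  | zero => intro w; rfl
  | succ m ih =>
    intro w
    rw [Function.iterate_succ_apply, K_t, ih, ← Function.iterate_succ_apply]

lemma G_restr (m : ℕ) (w : ℕ → Bool) :
    G^[4 * m] (cat [true] (cat [true] (cat [true] w))) =
      cat [true] (cat [true] (cat [true] (G^[2 * m] w))) := by
  rw [show 4 * m = 2 * (2 * m) from by ring, G_pow, H_pow, K_pow]

lemma coe_ca : ⇑(c * a) = G := by
  funext w
  rw [Equiv.Perm.mul_apply]
  rfl

lemma coe_ca_pow (n : ℕ) : ⇑((c * a) ^ n) = G^[n] := by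
  rw [← coe_ca, ← Equiv.Perm.coe_pow]

lemma one_cons : (fun _ => true : ℕ → Bool) = cat [true] (fun _ => true) := by
  funext n
  cases n with
  | zero => rw [cat_cons_zero]
  | succ n => rw [cat_cons_succ, cat_nil]

lemma one3 : (fun _ => true : ℕ → Bool) =
    cat [true] (cat [true] (cat [true] (fun _ => true))) := by
  conv_lhs => rw [one_cons, one_cons, one_cons]

lemma cat3 (w : ℕ → Bool) :
    cat [true, true, true] w = cat [true] (cat [true] (cat [true] w)) := by
  have h : [true, true, true] = [true] ++ ([true] ++ [true]) := rfl
  rw [h, cat_append, cat_append]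

lemma cat_one_iff (x : Bool) (v : ℕ → Bool) :
    cat [x] v = (fun _ => true) ↔ x = true ∧ v = (fun _ => true) := by
  constructor
  · intro h
    constructor
    · have h0 := congrFun h 0
      rwa [cat_cons_zero] at h0
    · funext n
      have h1 := congrFun h (n + 1)
      rwa [cat_cons_succ, cat_nil] at h1
  · rintro ⟨rfl, rfl⟩
    exact one_cons.symm

lemma gOne : G (fun _ => true) = cat [false] (fun _ => true) := by
  conv_lhs => rw [one_cons, G_t]

lemma kOne : K (fun _ => true) = cat [true] (cat [false] (fun _ => true)) := by
  conv_lhs => rw [one_cons, K_t, gOne]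

lemma hOne : H (fun _ => true) = cat [false] (cat [true] (cat [false] (fun _ => true))) := by
  conv_lhs => rw [one_cons, H_x, Bool.not_true, kOne]

lemma g2One : G^[2 * 1] (fun _ => true) =
    cat [true] (cat [false] (cat [true] (cat [false] (fun _ => true)))) := by
  conv_lhs => rw [one_cons]
  rw [G_pow, Function.iterate_one, hOne]

lemma orbit : ∀ n : ℕ, 2 ≤ n → G^[2 ^ n] (fun _ => true) =
    cat (List.replicate (3 * (n - 1)) true ++ [true, false, true, false]) (fun _ => true) := by
  intro n hn
  induction n, hn using Nat.le_induction with
  | base =>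
    rw [show (2 : ℕ) ^ 2 = 4 * 1 from by norm_num]
    conv_lhs => rw [one3]
    rw [G_restr, g2One]
    rw [show List.replicate (3 * (2 - 1)) true ++ [true, false, true, false] =
      [true] ++ ([true] ++ ([true] ++ ([true] ++ ([false] ++ ([true] ++ [false])))))
      from by decide]
    rw [cat_append, cat_append, cat_append, cat_append, cat_append, cat_append]
  | succ n hn ih =>
    have hp : (2 : ℕ) ^ (n + 1) = 4 * 2 ^ (n - 1) := by
      conv_lhs => rw [show n + 1 = n - 1 + 2 from by omega]
      rw [pow_add]; ring
    have hp2 : 2 * 2 ^ (n - 1) = 2 ^ n := by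
      conv_rhs => rw [show n = n - 1 + 1 from by omega]
      rw [pow_succ]; ring
    rw [hp]
    conv_lhs => rw [one3]
    rw [G_restr, hp2, ih]
    have hl : List.replicate (3 * (n + 1 - 1)) true ++ [true, false, true, false] =
        [true] ++ ([true] ++ ([true] ++
          (List.replicate (3 * (n - 1)) true ++ [true, false, true, false]))) := by
      rw [show 3 * (n + 1 - 1) = 3 + 3 * (n - 1) from by omega, List.replicate_add,
        List.append_assoc]
      rfl
    rw [hl]
    simp only [cat_append]

lemma nonfix : ∀ n : ℕ, 1 ≤ n → G^[n] (fun _ => true) ≠ (fun _ => true) := by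
  intro n
  induction n using Nat.strong_induction_on with
  | _ n ih =>
    intro hn h
    rcases Nat.even_or_odd n with he | ho
    · obtain ⟨m, hm⟩ := he
      rcases Nat.even_or_odd m with he' | ho'
      · obtain ⟨j, hj⟩ := he'
        rw [show n = 4 * j from by omega] at h
        conv_lhs at h => rw [one3, G_restr]
        rcases (cat_one_iff _ _).1 h with ⟨-, h⟩
        rcases (cat_one_iff _ _).1 h with ⟨-, h⟩
        rcases (cat_one_iff _ _).1 h with ⟨-, h⟩
        exact ih (2 * j) (by omega) (by omega) h
      · obtain ⟨l, hl⟩ := ho'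
        rw [show n = 2 * m from by omega] at h
        conv_lhs at h => rw [one_cons, G_pow]
        rcases (cat_one_iff _ _).1 h with ⟨-, h⟩
        rw [show m = 2 * l + 1 from by omega, Function.iterate_add_apply,
          Function.iterate_one] at h
        conv_lhs at h => rw [one_cons, H_x, Bool.not_true, H_pow]
        rcases (cat_one_iff _ _).1 h with ⟨hff, -⟩
        exact Bool.false_ne_true hff
    · obtain ⟨m, hm⟩ := ho
      rw [hm, Function.iterate_add_apply, Function.iterate_one] at h
      conv_lhs at h => rw [one_cons, G_t, G_pow]
      rcases (cat_one_iff _ _).1 h with ⟨hff, -⟩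
      exact Bool.false_ne_true hff

end Aux

/-- In the automaton group of automaton 887, for all `n ≥ 2`:
`(ca)^(2^n)|₁₁₁ = (ca)^(2^(n-1))` and `(ca)^(2^n)(1^∞) = (111)^(n-1) 1010 1^∞`.
In particular `(ca)ⁿ(1^∞) ≠ 1^∞` for all `n ≥ 1`, so `ca` has infinite order. -/
theorem automaton887_ca :
    (∀ n : ℕ, 2 ≤ n →
      resW ⇑((c * a) ^ 2 ^ n) [true, true, true] = ⇑((c * a) ^ 2 ^ (n - 1)) ∧
      ⇑((c * a) ^ 2 ^ n) (fun _ => true) =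
        cat (List.replicate (3 * (n - 1)) true ++ [true, false, true, false]) (fun _ => true)) ∧
    (∀ n : ℕ, 1 ≤ n → ⇑((c * a) ^ n) (fun _ => true) ≠ (fun _ => true)) ∧
    (∀ n : ℕ, 1 ≤ n → (c * a) ^ n ≠ 1) := by
  refine ⟨fun n hn => ⟨?_, ?_⟩, ?_, ?_⟩
  · funext w j
    simp only [resW]
    rw [coe_ca_pow, coe_ca_pow, cat3]
    have h1 : (2 : ℕ) ^ n = 4 * 2 ^ (n - 2) := by
      conv_lhs => rw [show n = n - 2 + 2 from by omega]
      rw [pow_add]; ring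
    have h2 : (2 : ℕ) ^ (n - 1) = 2 * 2 ^ (n - 2) := by
      conv_lhs => rw [show n - 1 = n - 2 + 1 from by omega]
      rw [pow_add]; ring
    rw [h1, h2, G_restr, ← cat3]
    exact cat_out _ _ _
  · rw [coe_ca_pow]
    exact orbit n hn
  · intro n hn
    rw [coe_ca_pow]
    exact nonfix n hn
  · intro n hn hne
    apply nonfix n hn
    rw [← coe_ca_pow, hne]
    rfl

end Stmt12
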